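/- For all (u_1,u_2,u_3) with u_2,u_3 ∈ (0,1) and u_1 ∈ [0,1], the mixed second partial derivative of the three-dimensional vine copula C with respect to u_2 and u_3 satisfies ∂²C(u_1,u_2,u_3)/∂u_2∂u_3 = ∂₃C_{13;2}( C_{1|2}(u_1|u_2), C_{3|2}(u_3|u_2) ) · c_{23}(u_2,u_3). -/

import Mathlib

noncomputable section

open MeasureTheory Set Function

/-- The density of a bivariate copula: the mixed second partial derivative `∂²C/∂s∂t`. -/
def copDens (C : ℝ × ℝ → ℝ) (s t : ℝ) : ℝ :=
  deriv (fun a => deriv (fun b => C (a, b)) t) s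

/-- The conditional distribution function `C_{1|2}(u₁|u₂) = ∂C₁₂(u₁,u₂)/∂u₂`. -/
def cond12 (C12 : ℝ × ℝ → ℝ) (u1 u2 : ℝ) : ℝ :=
  deriv (fun b => C12 (u1, b)) u2

/-- The conditional distribution function `C_{3|2}(u₃|u₂) = ∂C₂₃(u₂,u₃)/∂u₂`. -/
def cond32 (C23 : ℝ × ℝ → ℝ) (u3 u2 : ℝ) : ℝ :=
  deriv (fun a => C23 (a, u3)) u2

/-- `∂₁C(x,y) = ∂C(x,y)/∂x`. -/
def pdFst (C : ℝ × ℝ → ℝ) (x y : ℝ) : ℝ := deriv (fun a => C (a, y)) x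

/-- `∂₃C(x,y) = ∂C(x,y)/∂y` (derivative in the second argument). -/
def pdSnd (C : ℝ × ℝ → ℝ) (x y : ℝ) : ℝ := deriv (fun b => C (x, b)) y

/-- The three-dimensional vine copula built from the pair copulas `C₁₂, C₂₃, C₁₃;₂`:
`C(u₁,u₂,u₃) = ∫₀^{u₁}∫₀^{u₂}∫₀^{u₃} c₁₂(v₁,v₂) c₂₃(v₂,v₃)
  c₁₃;₂(C_{1|2}(v₁|v₂), C_{3|2}(v₃|v₂)) dv₃ dv₂ dv₁`. -/
def vine (C12 C23 C132 : ℝ × ℝ → ℝ) (u1 u2 u3 : ℝ) : ℝ :=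
  ∫ v1 in (0:ℝ)..u1, ∫ v2 in (0:ℝ)..u2, ∫ v3 in (0:ℝ)..u3,
    copDens C12 v1 v2 * copDens C23 v2 v3 *
      copDens C132 (cond12 C12 v1 v2) (cond32 C23 v3 v2)

/-! ### Auxiliary calculus lemmas -/

def d01 (C : ℝ × ℝ → ℝ) (p : ℝ × ℝ) : ℝ := fderiv ℝ C p (0, 1)
def d10 (C : ℝ × ℝ → ℝ) (p : ℝ × ℝ) : ℝ := fderiv ℝ C p (1, 0)
def dd (C : ℝ × ℝ → ℝ) (p : ℝ × ℝ) : ℝ := fderiv ℝ (d01 C) p (1, 0)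

lemma hasDerivAt_snd_line {C : ℝ × ℝ → ℝ} {p : ℝ × ℝ} (h : DifferentiableAt ℝ C p) :
    HasDerivAt (fun b => C (p.1, b)) (d01 C p) p.2 := by
  have h2 : HasDerivAt (fun b : ℝ => ((p.1 : ℝ), b)) ((0 : ℝ), (1 : ℝ)) p.2 :=
    HasDerivAt.prodMk (hasDerivAt_const _ _) (hasDerivAt_id _)
  exact h.hasFDerivAt.comp_hasDerivAt_of_eq p.2 h2 (by simp)

lemma hasDerivAt_fst_line {C : ℝ × ℝ → ℝ} {p : ℝ × ℝ} (h : DifferentiableAt ℝ C p) :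
    HasDerivAt (fun a => C (a, p.2)) (d10 C p) p.1 := by
  have h2 : HasDerivAt (fun a : ℝ => (a, (p.2 : ℝ))) ((1 : ℝ), (0 : ℝ)) p.1 :=
    HasDerivAt.prodMk (hasDerivAt_id _) (hasDerivAt_const _ _)
  exact h.hasFDerivAt.comp_hasDerivAt_of_eq p.1 h2 (by simp)

section core
variable {C : ℝ × ℝ → ℝ} {U : Set (ℝ × ℝ)} (hU : IsOpen U) (hC : ContDiffOn ℝ 2 C U)

include hU hC

lemma diffAt_of_mem {p : ℝ × ℝ} (hp : p ∈ U) : DifferentiableAt ℝ C p :=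
  ((hC.differentiableOn (by norm_num)) p hp).differentiableAt (hU.mem_nhds hp)

lemma fderiv_cd1 : ContDiffOn ℝ 1 (fderiv ℝ C) U :=
  hC.fderiv_of_isOpen hU (by norm_num)

lemma d01_cd1 : ContDiffOn ℝ 1 (d01 C) U :=
  (ContinuousLinearMap.apply ℝ ℝ ((0 : ℝ), (1 : ℝ))).contDiff.comp_contDiffOn
    (fderiv_cd1 hU hC)

lemma d01_contOn : ContinuousOn (d01 C) U := (d01_cd1 hU hC).continuousOn

lemma d10_contOn : ContinuousOn (d10 C) U :=
  ((ContinuousLinearMap.apply ℝ ℝ ((1 : ℝ), (0 : ℝ))).contDiff.comp_contDiffOn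
    (fderiv_cd1 hU hC)).continuousOn

lemma pdSnd_eq_d01 {p : ℝ × ℝ} (hp : p ∈ U) : pdSnd C p.1 p.2 = d01 C p :=
  (hasDerivAt_snd_line (diffAt_of_mem hU hC hp)).deriv

lemma dd_contOn : ContinuousOn (dd C) U :=
  (ContinuousLinearMap.apply ℝ ℝ ((1 : ℝ), (0 : ℝ))).continuous.comp_continuousOn
    ((d01_cd1 hU hC).continuousOn_fderiv_of_isOpen hU (by norm_num))

lemma hasDerivAt_pdSnd_fst {p : ℝ × ℝ} (hp : p ∈ U) :
    HasDerivAt (fun a => pdSnd C a p.2) (dd C p) p.1 := by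
  have hdiff : DifferentiableAt ℝ (d01 C) p :=
    (((d01_cd1 hU hC).differentiableOn one_ne_zero) p hp).differentiableAt (hU.mem_nhds hp)
  have h2 : HasDerivAt (fun a : ℝ => (a, (p.2 : ℝ))) ((1 : ℝ), (0 : ℝ)) p.1 :=
    HasDerivAt.prodMk (hasDerivAt_id _) (hasDerivAt_const _ _)
  have hv : HasDerivAt (fun a => d01 C (a, p.2)) (dd C p) p.1 :=
    hdiff.hasFDerivAt.comp_hasDerivAt_of_eq p.1 h2 (by simp)
  apply hv.congr_of_eventuallyEq
  have hopen : IsOpen {a : ℝ | (a, p.2) ∈ U} :=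
    hU.preimage (continuous_id.prodMk continuous_const)
  filter_upwards [hopen.mem_nhds (by simpa using hp)] with a ha
  exact pdSnd_eq_d01 hU hC (p := (a, p.2)) ha

lemma copDens_eq_dd {p : ℝ × ℝ} (hp : p ∈ U) : copDens C p.1 p.2 = dd C p :=
  (hasDerivAt_pdSnd_fst hU hC hp).deriv

end core

lemma swapIntegral (g : ℝ → ℝ → ℝ) (hg : Continuous (Function.uncurry g))
    {p q : ℝ} (hp : 0 ≤ p) (hq : 0 ≤ q) :
    ∫ x in (0:ℝ)..p, ∫ y in (0:ℝ)..q, g x y = ∫ y in (0:ℝ)..q, ∫ x in (0:ℝ)..p, g x y := by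
  rw [intervalIntegral.integral_of_le hp, intervalIntegral.integral_of_le hq]
  simp_rw [intervalIntegral.integral_of_le hq, intervalIntegral.integral_of_le hp]
  apply MeasureTheory.integral_integral_swap
  rw [Measure.prod_restrict]
  exact ((hg.continuousOn.integrableOn_compact (isCompact_Icc.prod isCompact_Icc)).mono_set
    (prod_mono Ioc_subset_Icc_self Ioc_subset_Icc_self))

lemma exists_cont_ext {O Q : Set (ℝ × ℝ × ℝ)} (hO : IsOpen O) (hQ : IsCompact Q)
    (hQc : IsClosed Q) (hQO : Q ⊆ O) (F : ℝ × ℝ × ℝ → ℝ) (hF : ContinuousOn F O) :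
    ∃ G : ℝ × ℝ × ℝ → ℝ, Continuous G ∧ ∀ v ∈ Q, G v = F v := by
  classical
  obtain ⟨L, hLcomp, hLint, hLO⟩ := exists_compact_between hQ hO hQO
  have hclos : closure (interior L) ⊆ L := closure_minimal interior_subset hLcomp.isClosed
  obtain ⟨f, hfsupp, hfone, hf01⟩ := exists_tsupport_one_of_isOpen_isClosed
    (s := interior L) (t := Q) isOpen_interior
    (hLcomp.of_isClosed_subset isClosed_closure hclos) hQc hLint
  refine ⟨fun v => if v ∈ O then f v * F v else 0, ?_, ?_⟩
  · rw [continuous_iff_continuousAt]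
    intro x
    by_cases hx : x ∈ O
    · have h1 : ContinuousAt (fun v => f v * F v) x :=
        (f.continuous.continuousAt).mul (hF.continuousAt (hO.mem_nhds hx))
      apply h1.congr
      filter_upwards [hO.mem_nhds hx] with y hy
      simp [hy]
    · have hxs : x ∉ tsupport f := fun h => hx (hLO ((hfsupp.trans interior_subset) h))
      have h0 : ContinuousAt (fun _ : ℝ × ℝ × ℝ => (0:ℝ)) x := continuousAt_const
      apply h0.congr
      filter_upwards [(isClosed_tsupport f).isOpen_compl.mem_nhds hxs] with y hy
      by_cases hy' : y ∈ O <;>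
        simp [hy', image_eq_zero_of_notMem_tsupport hy]
  · intro v hv
    simp [hQO hv, hfone hv]


/-- ∂²C(u₁,u₂,u₃)/∂u₂∂u₃ = ∂₃C₁₃;₂(C_{1|2}(u₁|u₂), C_{3|2}(u₃|u₂)) ⬝ c₂₃(u₂,u₃). -/
theorem vine_partial_u2_u3
    (C12 C23 C132 : ℝ × ℝ → ℝ)
    (U : Set (ℝ × ℝ)) (hU : IsOpen U)
    (hUsub : Set.Icc ((0 : ℝ), (0 : ℝ)) (1, 1) ⊆ U)
    (h12 : ContDiffOn ℝ 2 C12 U) (h23 : ContDiffOn ℝ 2 C23 U)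
    (h132 : ContDiffOn ℝ 2 C132 U)
    (hb12 : ∀ t ∈ Set.Icc (0:ℝ) 1, C12 (0, t) = 0 ∧ C12 (t, 0) = 0)
    (hb23 : ∀ t ∈ Set.Icc (0:ℝ) 1, C23 (0, t) = 0 ∧ C23 (t, 0) = 0)
    (hb132 : ∀ t ∈ Set.Icc (0:ℝ) 1, C132 (0, t) = 0 ∧ C132 (t, 0) = 0)
    (hr12 : ∀ u1 ∈ Set.Icc (0:ℝ) 1, ∀ u2 ∈ Set.Icc (0:ℝ) 1,
      cond12 C12 u1 u2 ∈ Set.Icc (0:ℝ) 1)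
    (hr32 : ∀ u3 ∈ Set.Icc (0:ℝ) 1, ∀ u2 ∈ Set.Icc (0:ℝ) 1,
      cond32 C23 u3 u2 ∈ Set.Icc (0:ℝ) 1)
    (u1 u2 u3 : ℝ) (hu1 : u1 ∈ Set.Icc (0:ℝ) 1) (hu2 : u2 ∈ Set.Ioo (0:ℝ) 1)
    (hu3 : u3 ∈ Set.Ioo (0:ℝ) 1) :
    deriv (fun b => deriv (fun c => vine C12 C23 C132 u1 b c) u3) u2 =
      pdSnd C132 (cond12 C12 u1 u2) (cond32 C23 u3 u2) * copDens C23 u2 u3 := by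
  classical
  have hmem : ∀ {x y : ℝ}, x ∈ Icc (0:ℝ) 1 → y ∈ Icc (0:ℝ) 1 → (x, y) ∈ U := by
    intro x y hx hy
    exact hUsub ⟨⟨hx.1, hy.1⟩, ⟨hx.2, hy.2⟩⟩
  have hu2' : u2 ∈ Icc (0:ℝ) 1 := Ioo_subset_Icc_self hu2
  have hu3' : u3 ∈ Icc (0:ℝ) 1 := Ioo_subset_Icc_self hu3
  have h0u1 : (0:ℝ) ≤ u1 := hu1.1
  -- identifications of our derivatives with fderiv-expressions
  have e12 : ∀ {x y : ℝ}, x ∈ Icc (0:ℝ) 1 → y ∈ Icc (0:ℝ) 1 →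
      cond12 C12 x y = d01 C12 (x, y) :=
    fun hx hy => pdSnd_eq_d01 hU h12 (hmem hx hy)
  have e32 : ∀ {x y : ℝ}, x ∈ Icc (0:ℝ) 1 → y ∈ Icc (0:ℝ) 1 →
      cond32 C23 x y = d10 C23 (y, x) :=
    fun hx hy => (hasDerivAt_fst_line (diffAt_of_mem hU h23 (hmem hy hx))).deriv
  -- the nice continuous version of the integrand
  set G0 : ℝ × ℝ × ℝ → ℝ := fun v =>
    dd C12 (v.1, v.2.1) * dd C23 (v.2.1, v.2.2) *
      dd C132 (d01 C12 (v.1, v.2.1), d10 C23 (v.2.1, v.2.2)) with hG0def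
  have hπ12 : Continuous (fun v : ℝ × ℝ × ℝ => (v.1, v.2.1)) := by fun_prop
  have hπ23 : Continuous (fun v : ℝ × ℝ × ℝ => (v.2.1, v.2.2)) := by fun_prop
  set A : Set (ℝ × ℝ × ℝ) :=
    ((fun v : ℝ × ℝ × ℝ => (v.1, v.2.1)) ⁻¹' U) ∩
      ((fun v : ℝ × ℝ × ℝ => (v.2.1, v.2.2)) ⁻¹' U) with hAdef
  have hAopen : IsOpen A := ((hU.preimage hπ12).inter (hU.preimage hπ23))
  set Φm : ℝ × ℝ × ℝ → ℝ × ℝ :=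
    fun v => (d01 C12 (v.1, v.2.1), d10 C23 (v.2.1, v.2.2)) with hΦmdef
  have hΦcont : ContinuousOn Φm A := by
    apply ContinuousOn.prodMk
    · exact (d01_contOn hU h12).comp hπ12.continuousOn (fun v hv => hv.1)
    · exact (d10_contOn hU h23).comp hπ23.continuousOn (fun v hv => hv.2)
  set O : Set (ℝ × ℝ × ℝ) := A ∩ Φm ⁻¹' U with hOdef
  have hOopen : IsOpen O := hΦcont.isOpen_inter_preimage hAopen hU
  set Q : Set (ℝ × ℝ × ℝ) := Icc (0:ℝ) 1 ×ˢ (Icc (0:ℝ) 1 ×ˢ Icc (0:ℝ) 1) with hQdef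
  have hQmem : ∀ {v1 v2 v3 : ℝ}, v1 ∈ Icc (0:ℝ) 1 → v2 ∈ Icc (0:ℝ) 1 → v3 ∈ Icc (0:ℝ) 1 →
      ((v1, v2, v3) : ℝ × ℝ × ℝ) ∈ Q := by
    intro v1 v2 v3 h1 h2 h3
    exact ⟨h1, h2, h3⟩
  have hQO : Q ⊆ O := by
    rintro ⟨v1, v2, v3⟩ ⟨h1, h2, h3⟩
    refine ⟨⟨hmem h1 h2, hmem h2 h3⟩, ?_⟩
    show (d01 C12 (v1, v2), d10 C23 (v2, v3)) ∈ U
    rw [← e12 h1 h2, ← e32 h3 h2]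
    exact hmem (hr12 v1 h1 v2 h2) (hr32 v3 h3 v2 h2)
  have hG0cont : ContinuousOn G0 O := by
    refine ContinuousOn.mul (ContinuousOn.mul ?_ ?_) ?_
    · exact (dd_contOn hU h12).comp hπ12.continuousOn (fun v hv => hv.1.1)
    · exact (dd_contOn hU h23).comp hπ23.continuousOn (fun v hv => hv.1.2)
    · exact (dd_contOn hU h132).comp (hΦcont.mono inter_subset_left) (fun v hv => hv.2)
  obtain ⟨G, hGcont, hGQ⟩ := exists_cont_ext hOopen
    ((isCompact_Icc).prod ((isCompact_Icc).prod isCompact_Icc))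
    ((isClosed_Icc).prod ((isClosed_Icc).prod isClosed_Icc)) hQO G0 hG0cont
  -- G agrees with the original integrand on the cube
  have hGF : ∀ {v1 v2 v3 : ℝ}, v1 ∈ Icc (0:ℝ) 1 → v2 ∈ Icc (0:ℝ) 1 → v3 ∈ Icc (0:ℝ) 1 →
      G (v1, v2, v3) = copDens C12 v1 v2 * copDens C23 v2 v3 *
        copDens C132 (cond12 C12 v1 v2) (cond32 C23 v3 v2) := by
    intro v1 v2 v3 h1 h2 h3
    rw [hGQ _ (hQmem h1 h2 h3)]
    have k1 : copDens C12 v1 v2 = dd C12 (v1, v2) := copDens_eq_dd hU h12 (hmem h1 h2)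
    have k2 : copDens C23 v2 v3 = dd C23 (v2, v3) := copDens_eq_dd hU h23 (hmem h2 h3)
    have hx : cond12 C12 v1 v2 ∈ Icc (0:ℝ) 1 := hr12 v1 h1 v2 h2
    have hy : cond32 C23 v3 v2 ∈ Icc (0:ℝ) 1 := hr32 v3 h3 v2 h2
    have k3 : copDens C132 (cond12 C12 v1 v2) (cond32 C23 v3 v2) =
        dd C132 (cond12 C12 v1 v2, cond32 C23 v3 v2) :=
      copDens_eq_dd hU h132 (hmem hx hy)
    show dd C12 (v1, v2) * dd C23 (v2, v3) *
        dd C132 (d01 C12 (v1, v2), d10 C23 (v2, v3)) = _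
    rw [k1, k2, k3, ← e12 h1 h2, ← e32 h3 h2]
  -- rewrite vine as an integral of G
  have hvineG : ∀ b ∈ Icc (0:ℝ) 1, ∀ c ∈ Icc (0:ℝ) 1,
      vine C12 C23 C132 u1 b c =
        ∫ v1 in (0:ℝ)..u1, ∫ v2 in (0:ℝ)..b, ∫ v3 in (0:ℝ)..c, G (v1, v2, v3) := by
    intro b hb c hc
    show (∫ v1 in (0:ℝ)..u1, ∫ v2 in (0:ℝ)..b, ∫ v3 in (0:ℝ)..c,
      copDens C12 v1 v2 * copDens C23 v2 v3 *
        copDens C132 (cond12 C12 v1 v2) (cond32 C23 v3 v2)) = _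
    apply intervalIntegral.integral_congr
    intro v1 hv1
    rw [uIcc_of_le h0u1] at hv1
    have h1 : v1 ∈ Icc (0:ℝ) 1 := ⟨hv1.1, hv1.2.trans hu1.2⟩
    apply intervalIntegral.integral_congr
    intro v2 hv2
    rw [uIcc_of_le hb.1] at hv2
    have h2 : v2 ∈ Icc (0:ℝ) 1 := ⟨hv2.1, hv2.2.trans hb.2⟩
    apply intervalIntegral.integral_congr
    intro v3 hv3
    rw [uIcc_of_le hc.1] at hv3
    have h3 : v3 ∈ Icc (0:ℝ) 1 := ⟨hv3.1, hv3.2.trans hc.2⟩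
    exact (hGF h1 h2 h3).symm
  -- the inner single integral as a function of v2
  set ψ : ℝ → ℝ := fun v2 => ∫ v1 in (0:ℝ)..u1, G (v1, v2, u3) with hψdef
  have hψcont : Continuous ψ := by
    apply intervalIntegral.continuous_parametric_intervalIntegral_of_continuous'
      (f := fun v2 v1 => G (v1, v2, u3))
    exact hGcont.comp (by fun_prop)
  -- the inner derivative
  have key1 : ∀ b ∈ Ioo (0:ℝ) 1,
      deriv (fun c => vine C12 C23 C132 u1 b c) u3 = ∫ v2 in (0:ℝ)..b, ψ v2 := by
    intro b hb
    have hb' : b ∈ Icc (0:ℝ) 1 := Ioo_subset_Icc_self hb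
    set Φb : ℝ → ℝ :=
      fun v3 => ∫ v1 in (0:ℝ)..u1, ∫ v2 in (0:ℝ)..b, G (v1, v2, v3) with hΦbdef
    have hHcont : Continuous (fun x : ℝ × ℝ => ∫ v2 in (0:ℝ)..b, G (x.1, v2, x.2)) := by
      apply intervalIntegral.continuous_parametric_intervalIntegral_of_continuous'
        (f := fun (x : ℝ × ℝ) v2 => G (x.1, v2, x.2))
      exact hGcont.comp (by fun_prop)
    have hΦbcont : Continuous Φb := by
      apply intervalIntegral.continuous_parametric_intervalIntegral_of_continuous'
        (f := fun v3 v1 => ∫ v2 in (0:ℝ)..b, G (v1, v2, v3))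
      exact hHcont.comp continuous_swap
    have hev : (fun c => vine C12 C23 C132 u1 b c) =ᶠ[nhds u3]
        fun c => ∫ v3 in (0:ℝ)..c, Φb v3 := by
      filter_upwards [isOpen_Ioo.mem_nhds hu3] with c hc
      have hc' : c ∈ Icc (0:ℝ) 1 := Ioo_subset_Icc_self hc
      rw [hvineG b hb' c hc']
      calc ∫ v1 in (0:ℝ)..u1, ∫ v2 in (0:ℝ)..b, ∫ v3 in (0:ℝ)..c, G (v1, v2, v3)
          = ∫ v1 in (0:ℝ)..u1, ∫ v3 in (0:ℝ)..c, ∫ v2 in (0:ℝ)..b, G (v1, v2, v3) := by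
            apply intervalIntegral.integral_congr
            intro v1 _
            exact swapIntegral (fun v2 v3 => G (v1, v2, v3))
              (hGcont.comp (by fun_prop)) hb'.1 hc'.1
        _ = ∫ v3 in (0:ℝ)..c, ∫ v1 in (0:ℝ)..u1, ∫ v2 in (0:ℝ)..b, G (v1, v2, v3) :=
            swapIntegral (fun v1 v3 => ∫ v2 in (0:ℝ)..b, G (v1, v2, v3)) hHcont h0u1 hc'.1
    rw [hev.deriv_eq, Continuous.deriv_integral Φb hΦbcont 0 u3]
    exact swapIntegral (fun v1 v2 => G (v1, v2, u3)) (hGcont.comp (by fun_prop)) h0u1 hb'.1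
  -- the outer derivative
  have hev2 : (fun b => deriv (fun c => vine C12 C23 C132 u1 b c) u3) =ᶠ[nhds u2]
      fun b => ∫ v2 in (0:ℝ)..b, ψ v2 := by
    filter_upwards [isOpen_Ioo.mem_nhds hu2] with b hb
    exact key1 b hb
  rw [hev2.deriv_eq, Continuous.deriv_integral ψ hψcont 0 u2]
  -- compute ψ u2
  have hψu2 : ψ u2 = ∫ v1 in (0:ℝ)..u1, copDens C12 v1 u2 * copDens C23 u2 u3 *
      copDens C132 (cond12 C12 v1 u2) (cond32 C23 u3 u2) := by
    apply intervalIntegral.integral_congr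
    intro v1 hv1
    rw [uIcc_of_le h0u1] at hv1
    exact hGF ⟨hv1.1, hv1.2.trans hu1.2⟩ hu2' hu3'
  rw [hψu2]
  -- final computation via FTC
  set y0 : ℝ := cond32 C23 u3 u2 with hy0def
  have hy0 : y0 ∈ Icc (0:ℝ) 1 := hr32 u3 hu3' u2 hu2'
  set k : ℝ := copDens C23 u2 u3 with hkdef
  set Φ : ℝ → ℝ := fun t => pdSnd C132 (cond12 C12 t u2) y0 with hΦdef
  have hΦderiv : ∀ t ∈ Icc (0:ℝ) 1,
      HasDerivAt Φ (copDens C12 t u2 * copDens C132 (cond12 C12 t u2) y0) t := by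
    intro t ht
    have h1 : HasDerivAt (fun a => cond12 C12 a u2) (copDens C12 t u2) t := by
      rw [copDens_eq_dd hU h12 (hmem ht hu2')]
      exact hasDerivAt_pdSnd_fst hU h12 (hmem ht hu2')
    have hx : cond12 C12 t u2 ∈ Icc (0:ℝ) 1 := hr12 t ht u2 hu2'
    have h2 : HasDerivAt (fun x => pdSnd C132 x y0)
        (copDens C132 (cond12 C12 t u2) y0) (cond12 C12 t u2) := by
      rw [copDens_eq_dd hU h132 (hmem hx hy0)]
      exact hasDerivAt_pdSnd_fst hU h132 (hmem hx hy0)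
    have := h2.comp t h1
    rw [mul_comm]; exact this
  have hcontInt : ContinuousOn
      (fun t => copDens C12 t u2 * copDens C132 (cond12 C12 t u2) y0) (Icc (0:ℝ) 1) := by
    have hg' : ContinuousOn
        (fun t => dd C12 (t, u2) * dd C132 (d01 C12 (t, u2), y0)) (Icc (0:ℝ) 1) := by
      have hc1 : ContinuousOn (fun t : ℝ => ((t, u2) : ℝ × ℝ)) (Icc (0:ℝ) 1) := by fun_prop
      have hm1 : ∀ t ∈ Icc (0:ℝ) 1, ((t, u2) : ℝ × ℝ) ∈ U := fun t ht => hmem ht hu2'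
      refine ContinuousOn.mul ((dd_contOn hU h12).comp hc1 hm1) ?_
      refine (dd_contOn hU h132).comp
        (ContinuousOn.prodMk (((d01_contOn hU h12).comp hc1 hm1)) continuousOn_const) ?_
      intro t ht
      show (d01 C12 (t, u2), y0) ∈ U
      rw [← e12 ht hu2']
      exact hmem (hr12 t ht u2 hu2') hy0
    apply hg'.congr
    intro t ht
    have k1 : copDens C12 t u2 = dd C12 (t, u2) := copDens_eq_dd hU h12 (hmem ht hu2')
    have k2 : copDens C132 (cond12 C12 t u2) y0 = dd C132 (cond12 C12 t u2, y0) :=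
      copDens_eq_dd hU h132 (hmem (hr12 t ht u2 hu2') hy0)
    show copDens C12 t u2 * copDens C132 (cond12 C12 t u2) y0 = _
    rw [k1, k2, e12 ht hu2']
  have hInt : IntervalIntegrable
      (fun t => copDens C12 t u2 * copDens C132 (cond12 C12 t u2) y0) volume 0 u1 := by
    apply ContinuousOn.intervalIntegrable
    apply hcontInt.mono
    rw [uIcc_of_le h0u1]
    exact Icc_subset_Icc le_rfl hu1.2
  have hFTC : ∫ t in (0:ℝ)..u1,
      copDens C12 t u2 * copDens C132 (cond12 C12 t u2) y0 = Φ u1 - Φ 0 := by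
    apply intervalIntegral.integral_eq_sub_of_hasDerivAt
    · intro t ht
      rw [uIcc_of_le h0u1] at ht
      exact hΦderiv t ⟨ht.1, ht.2.trans hu1.2⟩
    · exact hInt
  have hΦ0 : Φ 0 = 0 := by
    have hc0 : cond12 C12 0 u2 = 0 := by
      have hev0 : (fun b => C12 (0, b)) =ᶠ[nhds u2] fun _ => (0:ℝ) := by
        filter_upwards [isOpen_Ioo.mem_nhds hu2] with b hb
        exact (hb12 b (Ioo_subset_Icc_self hb)).1
      show deriv (fun b => C12 (0, b)) u2 = 0
      rw [hev0.deriv_eq]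
      exact deriv_const u2 0
    have h01 : (0:ℝ) ∈ Icc (0:ℝ) 1 := ⟨le_rfl, zero_le_one⟩
    have hd : HasDerivAt (fun b => C132 (0, b)) (d01 C132 (0, y0)) y0 :=
      hasDerivAt_snd_line (diffAt_of_mem hU h132 (hmem h01 hy0))
    have h1 : HasDerivWithinAt (fun b => C132 (0, b)) (d01 C132 (0, y0)) (Icc (0:ℝ) 1) y0 :=
      hd.hasDerivWithinAt
    have h2 : HasDerivWithinAt (fun b => C132 (0, b)) 0 (Icc (0:ℝ) 1) y0 := by
      apply (hasDerivWithinAt_const y0 (Icc (0:ℝ) 1) (0:ℝ)).congr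
      · intro b hb; exact (hb132 b hb).1
      · exact (hb132 y0 hy0).1
    have hud : UniqueDiffWithinAt ℝ (Icc (0:ℝ) 1) y0 := uniqueDiffOn_Icc zero_lt_one y0 hy0
    have hz : d01 C132 (0, y0) = 0 :=
      (h1.derivWithin hud).symm.trans (h2.derivWithin hud)
    show pdSnd C132 (cond12 C12 0 u2) y0 = 0
    rw [hc0]
    have : pdSnd C132 0 y0 = d01 C132 (0, y0) := hd.deriv
    rw [this, hz]
  have hrw : ∀ t : ℝ, copDens C12 t u2 * copDens C23 u2 u3 *
      copDens C132 (cond12 C12 t u2) (cond32 C23 u3 u2) =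
      k * (copDens C12 t u2 * copDens C132 (cond12 C12 t u2) y0) := by
    intro t; rw [hkdef, hy0def]; ring
  rw [intervalIntegral.integral_congr (fun t _ => hrw t)]
  rw [intervalIntegral.integral_const_mul, hFTC, hΦ0]
  show k * (pdSnd C132 (cond12 C12 u1 u2) y0 - 0) = pdSnd C132 (cond12 C12 u1 u2) y0 * k
  ring


end
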